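/- arXiv:2112.07377 — 6 statements merged into one kernel-verified Lean document; each statement's English description precedes it below -/
import Mathlib

section
/- In the calculus NMVL_A, the cut rule and the resolution rule are derivable from each other: every sequent derivable (from a set of hypothesis sequents) in the system with cut but without resolution is derivable in the system with resolution but without cut, and conversely. -/
/-- Formulas over a set `C` of connectives (applied to lists of arguments). -/
inductive Fm (C : Type) : Type
  | atom : ℕ → Fm C
  | app : C → List (Fm C) → Fm C

noncomputable instance {C : Type} : DecidableEq (Fm C) := Classical.decEq _

/-- A sequent of finite sets of labelled formulas. -/
structure Sequent (C : Type) [DecidableEq C] (n : ℕ) where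
  ant : Finset (Fm C × Fin n)
  suc : Finset (Fm C × Fin n)

variable {C : Type} [DecidableEq C] {n : ℕ}

/-- A valuation legal w.r.t. the non-deterministic tables `tbl`. -/
def IsVal (tbl : C → List (Fin n) → Finset (Fin n)) (v : Fm C → Fin n) : Prop :=
  ∀ c args, v (Fm.app c args) ∈ tbl c (args.map v)

/-- A valuation satisfies a sequent. -/
def Sat (v : Fm C → Fin n) (S : Sequent C n) : Prop :=
  (∀ p ∈ S.ant, v p.1 = p.2) → ∃ p ∈ S.suc, v p.1 = p.2

/-- Semantic entailment. -/
def Entails (tbl : C → List (Fin n) → Finset (Fin n)) (H : Set (Sequent C n)) (S : Sequent C n) : Prop :=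
  ∀ v : Fm C → Fin n, IsVal tbl v → (∀ T ∈ H, Sat v T) → Sat v S

/-- The family (∗(φ₁,…,φ_ℓ)×k)⁻¹ of antecedent sets. -/
def Theta (tbl : C → List (Fin n) → Finset (Fin n)) (c : C) (args : List (Fm C)) (k : Fin n) :
    Set (Finset (Fm C × Fin n)) :=
  { Θ | ∃ ks : List (Fin n), ks.length = args.length ∧ k ∈ tbl c ks ∧ Θ = (args.zip ks).toFinset }

/-- Λ ∈ ⋁(∗(φ₁,…,φ_ℓ)×k)⁻¹ : a choice set hitting each Θ_q and contained in their union. -/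
def Choice (tbl : C → List (Fin n) → Finset (Fin n)) (c : C) (args : List (Fm C)) (k : Fin n)
    (Λ : Finset (Fm C × Fin n)) : Prop :=
  (∀ Θ ∈ Theta tbl c args k, ∃ x ∈ Θ, x ∈ Λ) ∧
  (∀ x ∈ Λ, ∃ Θ ∈ Theta tbl c args k, x ∈ Θ)

/-- Which optional axioms/rules a calculus has. -/
structure Rules where
  tableAx : Bool      -- table axioms (2)
  tableRuleS : Bool   -- succedent table rules (10)
  dualAx : Bool       -- distributively dual axioms (13)
  anteRule : Bool     -- antecedent introduction rules (17)
  multiShift : Bool   -- K-L-multi-shift (16)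
  cut : Bool
  res : Bool

/-- Derivability from hypothesis sequents `H`; axioms (ψ,k)→(ψ,k), L-shift, R-shift and
weakenings are always present, the other axioms/rules are governed by `R`. -/
inductive Deriv (R : Rules) (tbl : C → List (Fin n) → Finset (Fin n)) (H : Set (Sequent C n)) :
    Sequent C n → Prop
  | hyp {S} : S ∈ H → Deriv R tbl H S
  | ax (ψ : Fm C) (k : Fin n) : Deriv R tbl H ⟨{(ψ, k)}, {(ψ, k)}⟩
  | tableAx (c : C) (args : List (Fm C)) (ks : List (Fin n))
      (hlen : ks.length = args.length) (h : R.tableAx = true) :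
      Deriv R tbl H ⟨(args.zip ks).toFinset, (tbl c ks).image (fun k => (Fm.app c args, k))⟩
  | lshift {Γ Δ} (φ : Fm C) (k : Fin n) :
      Deriv R tbl H ⟨insert (φ, k) Γ, Δ⟩ →
      Deriv R tbl H ⟨Γ, Δ ∪ ({k}ᶜ : Finset (Fin n)).image (fun k' => (φ, k'))⟩
  | rshift {Γ Δ} (φ : Fm C) {k' k'' : Fin n} (h : k' ≠ k'') :
      Deriv R tbl H ⟨Γ, insert (φ, k') Δ⟩ → Deriv R tbl H ⟨insert (φ, k'') Γ, Δ⟩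
  | lweak {Γ Δ} (φ : Fm C) (k : Fin n) :
      Deriv R tbl H ⟨Γ, Δ⟩ → Deriv R tbl H ⟨insert (φ, k) Γ, Δ⟩
  | rweak {Γ Δ} (φ : Fm C) (k : Fin n) :
      Deriv R tbl H ⟨Γ, Δ⟩ → Deriv R tbl H ⟨Γ, insert (φ, k) Δ⟩
  | cut {Γ Δ} (φ : Fm C) (k : Fin n) (h : R.cut = true) :
      Deriv R tbl H ⟨Γ, insert (φ, k) Δ⟩ → Deriv R tbl H ⟨insert (φ, k) Γ, Δ⟩ →
      Deriv R tbl H ⟨Γ, Δ⟩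
  | res {Γ Δ' Δ''} (φ : Fm C) {k' k'' : Fin n} (h : R.res = true) (hk : k' ≠ k'') :
      Deriv R tbl H ⟨Γ, insert (φ, k') Δ'⟩ → Deriv R tbl H ⟨Γ, insert (φ, k'') Δ''⟩ →
      Deriv R tbl H ⟨Γ, Δ' ∪ Δ''⟩
  | tableRuleS {Γ Δ} (c : C) (args : List (Fm C)) (ks : List (Fin n))
      (hlen : ks.length = args.length) (h : R.tableRuleS = true)
      (prem : ∀ p ∈ args.zip ks, Deriv R tbl H ⟨Γ, insert p Δ⟩) :
      Deriv R tbl H ⟨Γ, Δ ∪ (tbl c ks).image (fun k => (Fm.app c args, k))⟩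
  | dualAx (c : C) (args : List (Fm C)) (k : Fin n) (Λ : Finset (Fm C × Fin n))
      (h : R.dualAx = true) (hΛ : Choice tbl c args k Λ) :
      Deriv R tbl H ⟨{(Fm.app c args, k)}, Λ⟩
  | anteRule {Γ Δ} (c : C) (args : List (Fm C)) (k : Fin n) (h : R.anteRule = true)
      (prem : ∀ ks : List (Fin n), ks.length = args.length → k ∈ tbl c ks →
        Deriv R tbl H ⟨Γ ∪ (args.zip ks).toFinset, Δ⟩) :
      Deriv R tbl H ⟨insert (Fm.app c args, k) Γ, Δ⟩
  | multiShift {Γ Δ} (φ : Fm C) (K : Finset (Fin n)) (h : R.multiShift = true)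
      (hK : K ≠ Finset.univ)
      (prem : ∀ k ∈ K, Deriv R tbl H ⟨insert (φ, k) Γ, Δ⟩) :
      Deriv R tbl H ⟨Γ, Δ ∪ Kᶜ.image (fun k' => (φ, k'))⟩

/-- NMVL_A : table axioms, cut and resolution. -/
def NMVL_A : Rules := ⟨true, false, false, false, false, true, true⟩
/-- NMVL_A with cut but without resolution. -/
def NMVL_A_cut : Rules := ⟨true, false, false, false, false, true, false⟩
/-- NMVL_A with resolution but without cut. -/
def NMVL_A_res : Rules := ⟨true, false, false, false, false, false, true⟩
/-- NMVL_R : succedent table rules, cut and resolution. -/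
def NMVL_R : Rules := ⟨false, true, false, false, false, true, true⟩
/-- NMVL_R without cut and resolution. -/
def NMVL_R_cf : Rules := ⟨false, true, false, false, false, false, false⟩
/-- NMVL_A^dd : distributively dual axioms, cut and resolution. -/
def NMVL_Add : Rules := ⟨false, false, true, false, false, true, true⟩
/-- NMVL_R^sd : antecedent table rules, multi-shift, cut and resolution. -/
def NMVL_Rsd : Rules := ⟨false, false, false, true, true, true, true⟩

/-- Repeated right weakening. -/
lemma rweakMany {R : Rules} {tbl : C → List (Fin n) → Finset (Fin n)} {H : Set (Sequent C n)}
    {Γ Δ : Finset (Fm C × Fin n)} (d : Deriv R tbl H ⟨Γ, Δ⟩) (Δ₂ : Finset (Fm C × Fin n)) :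
    Deriv R tbl H ⟨Γ, Δ ∪ Δ₂⟩ := by
  induction Δ₂ using Finset.induction with
  | empty => simpa using d
  | @insert a s ha ih =>
      rw [Finset.union_insert]
      exact Deriv.rweak a.1 a.2 (by simpa using ih)

/-- Repeated resolution against a fixed premise. -/
lemma resolveMany {R : Rules} {tbl : C → List (Fin n) → Finset (Fin n)} {H : Set (Sequent C n)}
    {Γ Δ : Finset (Fm C × Fin n)} (hres : R.res = true) (φ : Fm C) (k : Fin n)
    (d : Deriv R tbl H ⟨Γ, insert (φ, k) Δ⟩) :
    ∀ K : Finset (Fin n), k ∉ K →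
      Deriv R tbl H ⟨Γ, Δ ∪ K.image (fun k' => (φ, k'))⟩ → Deriv R tbl H ⟨Γ, Δ⟩ := by
  intro K
  induction K using Finset.induction with
  | empty => intro _ d2; simpa using d2
  | @insert a s ha ih =>
      intro hk d2
      have hak : a ≠ k := fun h => hk (h ▸ Finset.mem_insert_self a s)
      rw [Finset.image_insert, Finset.union_insert] at d2
      have d3 : Deriv R tbl H ⟨Γ, (Δ ∪ s.image (fun k' => (φ, k'))) ∪ Δ⟩ :=
        Deriv.res φ hres hak d2 d
      rw [Finset.union_right_comm, Finset.union_idempotent] at d3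
      exact ih (fun h => hk (Finset.mem_insert_of_mem h)) d3

/-- in NMVL_A, cut and resolution are derivable from each other. -/
theorem stmt1 (hn : 2 ≤ n) (tbl : C → List (Fin n) → Finset (Fin n))
    (htbl : ∀ c ks, (tbl c ks).Nonempty) (H : Set (Sequent C n)) (S : Sequent C n) :
    Deriv NMVL_A_cut tbl H S ↔ Deriv NMVL_A_res tbl H S := by
  constructor
  · intro d
    induction d with
    | hyp h => exact Deriv.hyp h
    | ax ψ k => exact Deriv.ax ψ k
    | tableAx c args ks hlen h => exact Deriv.tableAx c args ks hlen rfl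
    | lshift φ k _ ih => exact Deriv.lshift φ k ih
    | rshift φ h _ ih => exact Deriv.rshift φ h ih
    | lweak φ k _ ih => exact Deriv.lweak φ k ih
    | rweak φ k _ ih => exact Deriv.rweak φ k ih
    | @cut Γ Δ φ k h d1 d2 ih1 ih2 =>
        have dsh := Deriv.lshift φ k ih2
        refine resolveMany rfl φ k ih1 ({k}ᶜ) (by simp) dsh
    | res φ h hk _ _ _ _ => exact absurd h (by simp [NMVL_A_cut])
    | tableRuleS c args ks hlen h prem ih => exact absurd h (by simp [NMVL_A_cut])
    | dualAx c args k Λ h hΛ => exact absurd h (by simp [NMVL_A_cut])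
    | anteRule c args k h prem ih => exact absurd h (by simp [NMVL_A_cut])
    | multiShift φ K h hK prem ih => exact absurd h (by simp [NMVL_A_cut])
  · intro d
    induction d with
    | hyp h => exact Deriv.hyp h
    | ax ψ k => exact Deriv.ax ψ k
    | tableAx c args ks hlen h => exact Deriv.tableAx c args ks hlen rfl
    | lshift φ k _ ih => exact Deriv.lshift φ k ih
    | rshift φ h _ ih => exact Deriv.rshift φ h ih
    | lweak φ k _ ih => exact Deriv.lweak φ k ih
    | rweak φ k _ ih => exact Deriv.rweak φ k ih
    | cut φ k h _ _ _ _ => exact absurd h (by simp [NMVL_A_res])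
    | @res Γ Δ' Δ'' φ k' k'' h hk d1 d2 ih1 ih2 =>
        -- simulate resolution by cut
        have e1 : Deriv NMVL_A_cut tbl H ⟨insert (φ, k'') Γ, Δ'⟩ := Deriv.rshift φ hk ih1
        have e1' : Deriv NMVL_A_cut tbl H ⟨insert (φ, k'') Γ, Δ' ∪ Δ''⟩ := rweakMany e1 Δ''
        have e2 : Deriv NMVL_A_cut tbl H ⟨Γ, insert (φ, k'') Δ'' ∪ Δ'⟩ := rweakMany ih2 Δ'
        rw [Finset.insert_union, Finset.union_comm Δ'' Δ'] at e2
        exact Deriv.cut φ k'' rfl e2 e1'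
    | tableRuleS c args ks hlen h prem ih => exact absurd h (by simp [NMVL_A_res])
    | dualAx c args k Λ h hΛ => exact absurd h (by simp [NMVL_A_res])
    | anteRule c args k h prem ih => exact absurd h (by simp [NMVL_A_res])
    | multiShift φ K h hK prem ih => exact absurd h (by simp [NMVL_A_res])
end

section
/- If a sequent Γ → Δ is not derivable in NMVL_A, then the antecedent Γ contains no two labelled formulas (φ,k′), (φ,k″) with the same formula φ and distinct labels k′ ≠ k″. -/
variable {C : Type} [DecidableEq C] {n : ℕ}

lemma deriv_weak {R : Rules} {tbl : C → List (Fin n) → Finset (Fin n)} {H : Set (Sequent C n)}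
    {Γ₀ Δ₀ Γ Δ : Finset (Fm C × Fin n)} (hΓ : Γ₀ ⊆ Γ) (hΔ : Δ₀ ⊆ Δ)
    (h : Deriv R tbl H ⟨Γ₀, Δ₀⟩) : Deriv R tbl H ⟨Γ, Δ⟩ := by
  have key : ∀ (Γ' Δ' : Finset (Fm C × Fin n)), Deriv R tbl H ⟨Γ₀ ∪ Γ', Δ₀ ∪ Δ'⟩ := by
    intro Γ'
    induction Γ' using Finset.induction_on with
    | empty =>
      intro Δ'
      induction Δ' using Finset.induction_on with
      | empty => simpa using h
      | @insert a s hx ih =>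
        have := Deriv.rweak (Γ := Γ₀ ∪ ∅) (Δ := Δ₀ ∪ s) a.1 a.2 ih
        simpa [Finset.union_insert, Finset.insert_union] using this
    | @insert a s hx ih =>
      intro Δ'
      have := Deriv.lweak (Γ := Γ₀ ∪ s) (Δ := Δ₀ ∪ Δ') a.1 a.2 (ih Δ')
      simpa [Finset.union_insert] using this
  have := key Γ Δ
  rwa [Finset.union_eq_right.mpr hΓ, Finset.union_eq_right.mpr hΔ] at this

/-- an NMVL_A-underivable sequent has no formula with two distinct labels
in its antecedent. -/
theorem stmt2 (hn : 2 ≤ n) (tbl : C → List (Fin n) → Finset (Fin n))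
    (htbl : ∀ c ks, (tbl c ks).Nonempty) (Γ Δ : Finset (Fm C × Fin n))
    (hund : ¬ Deriv NMVL_A tbl ∅ ⟨Γ, Δ⟩) :
    ∀ (φ : Fm C) (k' k'' : Fin n), k' ≠ k'' → (φ, k') ∈ Γ → (φ, k'') ∈ Γ → False := by
  intro φ k' k'' hk h1 h2
  apply hund
  have ax : Deriv NMVL_A tbl ∅ ⟨{(φ, k')}, insert (φ, k') ∅⟩ := by
    simpa using Deriv.ax (R := NMVL_A) (tbl := tbl) (H := ∅) φ k'
  have hs : Deriv NMVL_A tbl ∅ ⟨insert (φ, k'') {(φ, k')}, ∅⟩ :=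
    Deriv.rshift φ hk ax
  apply deriv_weak (Γ₀ := insert (φ, k'') {(φ, k')}) (Δ₀ := ∅) ?_ (Finset.empty_subset _) hs
  intro x hx
  simp only [Finset.mem_insert, Finset.mem_singleton] at hx
  rcases hx with h | h <;> subst h <;> assumption
end

section
/- The calculus NMVL_A is sound: if a sequent Γ → Δ is derivable in NMVL_A from a set of hypothesis sequents Σ, then every valuation satisfying all sequents in Σ satisfies Γ → Δ. -/
variable {C : Type} [DecidableEq C] {n : ℕ}

lemma map_eq_of_zip {v : Fm C → Fin n} : ∀ {args : List (Fm C)} {ks : List (Fin n)},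
    ks.length = args.length → (∀ p ∈ args.zip ks, v p.1 = p.2) → args.map v = ks
  | [], [], _, _ => rfl
  | a :: args, k :: ks, hlen, h => by
    simp only [List.map_cons]
    refine congrArg₂ _ (h (a, k) (by simp)) (map_eq_of_zip (by simpa using hlen) ?_)
    intro p hp; exact h p (by simp [hp])

/-- soundness of NMVL_A. -/
theorem stmt3 (hn : 2 ≤ n) (tbl : C → List (Fin n) → Finset (Fin n))
    (htbl : ∀ c ks, (tbl c ks).Nonempty) (H : Set (Sequent C n)) (S : Sequent C n)
    (hder : Deriv NMVL_A tbl H S) : Entails tbl H S := by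
  intro v hv hH
  induction hder with
  | hyp hS => exact hH _ hS
  | ax ψ k => intro h; exact ⟨(ψ, k), by simp, h (ψ, k) (by simp)⟩
  | tableAx c args ks hlen h =>
    intro hant
    have hmap : args.map v = ks := map_eq_of_zip hlen (fun p hp => hant p (by simpa using hp))
    refine ⟨(Fm.app c args, v (Fm.app c args)), ?_, rfl⟩
    simp only [Finset.mem_image]
    exact ⟨v (Fm.app c args), by rw [← hmap]; exact hv c args, rfl⟩
  | lshift φ k hd ih =>
    intro hant
    by_cases hφ : v φ = k
    · obtain ⟨p, hp, hvp⟩ := ih (by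
        intro p hp
        rcases Finset.mem_insert.mp hp with rfl | hp
        · exact hφ
        · exact hant p hp)
      exact ⟨p, Finset.mem_union_left _ hp, hvp⟩
    · exact ⟨(φ, v φ), Finset.mem_union_right _ (by simp [hφ]), rfl⟩
  | rshift φ hkk hd ih =>
    intro hant
    have hφ := hant _ (Finset.mem_insert_self _ _)
    obtain ⟨p, hp, hvp⟩ := ih (fun p hp => hant p (Finset.mem_insert_of_mem hp))
    rcases Finset.mem_insert.mp hp with rfl | hp
    · exact absurd (hvp.symm.trans hφ) hkk
    · exact ⟨p, hp, hvp⟩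
  | lweak φ k hd ih =>
    intro hant; exact ih (fun p hp => hant p (Finset.mem_insert_of_mem hp))
  | rweak φ k hd ih =>
    intro hant
    obtain ⟨p, hp, hvp⟩ := ih hant
    exact ⟨p, Finset.mem_insert_of_mem hp, hvp⟩
  | cut φ k h hd1 hd2 ih1 ih2 =>
    intro hant
    obtain ⟨p, hp, hvp⟩ := ih1 hant
    rcases Finset.mem_insert.mp hp with rfl | hp
    · exact ih2 (by
        intro q hq
        rcases Finset.mem_insert.mp hq with rfl | hq
        · exact hvp
        · exact hant q hq)
    · exact ⟨p, hp, hvp⟩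
  | res φ h hkk hd1 hd2 ih1 ih2 =>
    rename_i k' k''
    intro hant
    by_cases hφ : v φ = k'
    · obtain ⟨p, hp, hvp⟩ := ih2 hant
      rcases Finset.mem_insert.mp hp with rfl | hp
      · exact absurd (hφ.symm.trans hvp) hkk
      · exact ⟨p, Finset.mem_union_right _ hp, hvp⟩
    · obtain ⟨p, hp, hvp⟩ := ih1 hant
      rcases Finset.mem_insert.mp hp with rfl | hp
      · exact absurd hvp hφ
      · exact ⟨p, Finset.mem_union_left _ hp, hvp⟩
  | tableRuleS c args ks hlen h prem ih => exact absurd h (by decide)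
  | dualAx c args k Λ h hΛ => exact absurd h (by decide)
  | anteRule c args k h prem ih => exact absurd h (by decide)
  | multiShift φ K h hK prem ih => exact absurd h (by decide)
end

section
/- The calculus NMVL_A is strongly complete: if every valuation satisfying all sequents in a set Σ also satisfies the sequent Γ → Δ, then Γ → Δ is derivable in NMVL_A from Σ. -/
variable {C : Type} [DecidableEq C] {n : ℕ}

section CompletenessAux

variable {R : Rules} {tbl : C → List (Fin n) → Finset (Fin n)} {H : Set (Sequent C n)}

lemma deriv_lweaks {Γ Δ : Finset (Fm C × Fin n)} (E : Finset (Fm C × Fin n))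
    (h : Deriv R tbl H ⟨Γ, Δ⟩) : Deriv R tbl H ⟨Γ ∪ E, Δ⟩ := by
  classical
  induction E using Finset.induction_on with
  | empty => simpa using h
  | insert _ _ hx ih => rw [Finset.union_insert]; exact Deriv.lweak _ _ ih

lemma deriv_rweaks {Γ Δ : Finset (Fm C × Fin n)} (E : Finset (Fm C × Fin n))
    (h : Deriv R tbl H ⟨Γ, Δ⟩) : Deriv R tbl H ⟨Γ, Δ ∪ E⟩ := by
  classical
  induction E using Finset.induction_on with
  | empty => simpa using h
  | insert _ _ hx ih => rw [Finset.union_insert]; exact Deriv.rweak _ _ ih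

lemma deriv_weaken {Γ Δ Γ' Δ' : Finset (Fm C × Fin n)}
    (h : Deriv R tbl H ⟨Γ, Δ⟩) (hΓ : Γ ⊆ Γ') (hΔ : Δ ⊆ Δ') : Deriv R tbl H ⟨Γ', Δ'⟩ := by
  have h1 : Deriv R tbl H ⟨Γ ∪ Γ', Δ ∪ Δ'⟩ := deriv_rweaks _ (deriv_lweaks _ h)
  rwa [Finset.union_eq_right.mpr hΓ, Finset.union_eq_right.mpr hΔ] at h1

lemma deriv_cut2 (hR : R.cut = true) {Γ₁ Δ₁ Γ₂ Δ₂ : Finset (Fm C × Fin n)}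
    (φ : Fm C) (k : Fin n)
    (h1 : Deriv R tbl H ⟨insert (φ, k) Γ₁, Δ₁⟩)
    (h2 : Deriv R tbl H ⟨Γ₂, insert (φ, k) Δ₂⟩) :
    Deriv R tbl H ⟨Γ₁ ∪ Γ₂, Δ₁ ∪ Δ₂⟩ := by
  refine Deriv.cut φ k hR ?_ ?_
  · exact deriv_weaken h2 Finset.subset_union_right
      (Finset.insert_subset_insert _ Finset.subset_union_right)
  · exact deriv_weaken h1 (Finset.insert_subset_insert _ Finset.subset_union_left)
      Finset.subset_union_left

lemma deriv_two_vals (φ : Fm C) {k k' : Fin n} (hkk : k ≠ k') :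
    Deriv R tbl H ⟨insert (φ, k') {(φ, k)}, ∅⟩ :=
  Deriv.rshift φ hkk (Deriv.ax φ k)

end CompletenessAux

/-- strong completeness of NMVL_A. -/
theorem stmt4 (hn : 2 ≤ n) (tbl : C → List (Fin n) → Finset (Fin n))
    (htbl : ∀ c ks, (tbl c ks).Nonempty) (H : Set (Sequent C n)) (S : Sequent C n)
    (hent : Entails tbl H S) : Deriv NMVL_A tbl H S := by
  classical
  by_contra hS
  -- "Good" sets of signed labelled formulas: no derivable refutation inside.
  set Good : Set (Set ((Fm C × Fin n) × Bool)) :=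
    {X | ∀ Γ Δ : Finset (Fm C × Fin n), (∀ p ∈ Γ, (p, true) ∈ X) →
      (∀ p ∈ Δ, (p, false) ∈ X) → ¬ Deriv NMVL_A tbl H ⟨Γ, Δ⟩} with hGood
  set X₀ : Set ((Fm C × Fin n) × Bool) :=
    (fun p => (p, true)) '' ↑S.ant ∪ (fun p => (p, false)) '' ↑S.suc with hX₀def
  have hX₀ : X₀ ∈ Good := by
    intro Γ Δ hΓ hΔ hd
    apply hS
    have hΓ' : Γ ⊆ S.ant := by
      intro p hp
      rcases hΓ p hp with ⟨q, hq, heq⟩ | ⟨q, hq, heq⟩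
      · obtain ⟨rfl, -⟩ := Prod.mk.injEq .. ▸ heq; exact hq
      · simp at heq
    have hΔ' : Δ ⊆ S.suc := by
      intro p hp
      rcases hΔ p hp with ⟨q, hq, heq⟩ | ⟨q, hq, heq⟩
      · simp at heq
      · obtain ⟨rfl, -⟩ := Prod.mk.injEq .. ▸ heq; exact hq
    exact deriv_weaken hd hΓ' hΔ'
  -- Zorn's lemma
  obtain ⟨M, hX₀M, hMGood, hMmax⟩ :
      ∃ M, X₀ ⊆ M ∧ M ∈ Good ∧ ∀ Y ∈ Good, M ⊆ Y → Y ⊆ M := by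
    have hub : ∀ c ⊆ Good, IsChain (· ⊆ ·) c → c.Nonempty →
        ∃ ub ∈ Good, ∀ s ∈ c, s ⊆ ub := by
      intro c hcG hchain hcne
      refine ⟨⋃₀ c, ?_, fun s hs => Set.subset_sUnion_of_mem hs⟩
      intro Γ Δ hΓ hΔ hd
      haveI : Nonempty c := hcne.to_subtype
      have hdir : Directed (· ⊆ ·) (fun t : c => (t : Set ((Fm C × Fin n) × Bool))) :=
        directedOn_iff_directed.mp hchain.directedOn
      set F : Finset ((Fm C × Fin n) × Bool) :=
        Γ.image (fun p => (p, true)) ∪ Δ.image (fun p => (p, false)) with hF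
      have hFsub : (F : Set ((Fm C × Fin n) × Bool)) ⊆ ⋃ t : c, (t : Set _) := by
        intro x hx
        rw [← Set.sUnion_eq_iUnion]
        simp only [hF, Finset.coe_union, Set.mem_union, Finset.coe_image,
          Set.mem_image, Finset.mem_coe] at hx
        rcases hx with ⟨p, hp, rfl⟩ | ⟨p, hp, rfl⟩
        · exact hΓ p hp
        · exact hΔ p hp
      obtain ⟨⟨t, htc⟩, ht⟩ := hdir.exists_mem_subset_of_finset_subset_biUnion hFsub
      refine hcG htc Γ Δ ?_ ?_ hd
      · intro p hp
        exact ht (by simp only [hF, Finset.coe_union, Set.mem_union, Finset.coe_image,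
            Set.mem_image, Finset.mem_coe]; exact Or.inl ⟨p, hp, rfl⟩)
      · intro p hp
        exact ht (by simp only [hF, Finset.coe_union, Set.mem_union, Finset.coe_image,
            Set.mem_image, Finset.mem_coe]; exact Or.inr ⟨p, hp, rfl⟩)
    obtain ⟨M, h1, h2⟩ := zorn_subset_nonempty Good hub X₀ hX₀
    exact ⟨M, h1, h2.1, fun Y hY hMY => h2.2 hY hMY⟩
  have good : ∀ Γ Δ : Finset (Fm C × Fin n), (∀ p ∈ Γ, (p, true) ∈ M) →
      (∀ p ∈ Δ, (p, false) ∈ M) → ¬ Deriv NMVL_A tbl H ⟨Γ, Δ⟩ := hMGood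
  -- If (p, true) ∉ M, adding it breaks goodness.
  have hApos : ∀ p : Fm C × Fin n, (p, true) ∉ M →
      ∃ Γ Δ : Finset (Fm C × Fin n), (∀ q ∈ Γ, (q, true) ∈ M) ∧
        (∀ q ∈ Δ, (q, false) ∈ M) ∧ Deriv NMVL_A tbl H ⟨insert p Γ, Δ⟩ := by
    intro p hp
    have hnot : insert (p, true) M ∉ Good := by
      intro hIn
      exact hp (hMmax _ hIn (Set.subset_insert _ _) (Set.mem_insert _ _))
    simp only [hGood, Set.mem_setOf_eq] at hnot
    push_neg at hnot
    obtain ⟨Γ, Δ, hΓ, hΔ, hd⟩ := hnot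
    refine ⟨Γ.erase p, Δ, ?_, ?_, ?_⟩
    · intro q hq
      rcases hΓ q (Finset.mem_of_mem_erase hq) with heq | hin
      · exact absurd ((Prod.mk.injEq .. ▸ heq).1) (Finset.ne_of_mem_erase hq)
      · exact hin
    · intro q hq
      rcases hΔ q hq with heq | hin
      · simp at heq
      · exact hin
    · exact deriv_weaken hd (Finset.subset_insert_iff.mpr le_rfl) le_rfl
  have hBpos : ∀ p : Fm C × Fin n, (p, false) ∉ M →
      ∃ Γ Δ : Finset (Fm C × Fin n), (∀ q ∈ Γ, (q, true) ∈ M) ∧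
        (∀ q ∈ Δ, (q, false) ∈ M) ∧ Deriv NMVL_A tbl H ⟨Γ, insert p Δ⟩ := by
    intro p hp
    have hnot : insert (p, false) M ∉ Good := by
      intro hIn
      exact hp (hMmax _ hIn (Set.subset_insert _ _) (Set.mem_insert _ _))
    simp only [hGood, Set.mem_setOf_eq] at hnot
    push_neg at hnot
    obtain ⟨Γ, Δ, hΓ, hΔ, hd⟩ := hnot
    refine ⟨Γ, Δ.erase p, ?_, ?_, ?_⟩
    · intro q hq
      rcases hΓ q hq with heq | hin
      · simp at heq
      · exact hin
    · intro q hq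
      rcases hΔ q (Finset.mem_of_mem_erase hq) with heq | hin
      · exact absurd ((Prod.mk.injEq .. ▸ heq).1) (Finset.ne_of_mem_erase hq)
      · exact hin
    · exact deriv_weaken hd le_rfl (Finset.subset_insert_iff.mpr le_rfl)
  -- Totality: each labelled formula is decided by M.
  have total : ∀ p : Fm C × Fin n, (p, true) ∈ M ∨ (p, false) ∈ M := by
    intro p
    by_contra hc
    push_neg at hc
    obtain ⟨Γ₁, Δ₁, hΓ₁, hΔ₁, hd₁⟩ := hApos p hc.1
    obtain ⟨Γ₂, Δ₂, hΓ₂, hΔ₂, hd₂⟩ := hBpos p hc.2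
    have := deriv_cut2 rfl p.1 p.2 hd₁ hd₂
    refine good (Γ₁ ∪ Γ₂) (Δ₁ ∪ Δ₂) ?_ ?_ this
    · intro q hq
      rcases Finset.mem_union.mp hq with h | h
      exacts [hΓ₁ q h, hΓ₂ q h]
    · intro q hq
      rcases Finset.mem_union.mp hq with h | h
      exacts [hΔ₁ q h, hΔ₂ q h]
  have notboth : ∀ p : Fm C × Fin n, (p, true) ∈ M → (p, false) ∈ M → False := by
    intro p h1 h2
    exact good {p} {p} (by simpa using h1) (by simpa using h2) (Deriv.ax p.1 p.2)
  -- Uniqueness of the accepted truth value.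
  have huniq : ∀ (φ : Fm C) (k k' : Fin n),
      ((φ, k), true) ∈ M → ((φ, k'), true) ∈ M → k = k' := by
    intro φ k k' h1 h2
    by_contra hkk
    refine good (insert (φ, k') {(φ, k)}) ∅ ?_ (by simp) (deriv_two_vals φ hkk)
    intro q hq
    rcases Finset.mem_insert.mp hq with rfl | hq
    · exact h2
    · rw [Finset.mem_singleton.mp hq]; exact h1
  -- Existence of an accepted truth value.
  have hex : ∀ φ : Fm C, ∃ k : Fin n, ((φ, k), true) ∈ M := by
    intro φ
    by_contra hno
    push_neg at hno
    have k₀ : Fin n := ⟨0, by omega⟩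
    obtain ⟨Γ, Δ, hΓ, hΔ, hd⟩ := hApos (φ, k₀) (hno k₀)
    have hd' := Deriv.lshift φ k₀ hd
    refine good _ _ hΓ ?_ hd'
    intro q hq
    rcases Finset.mem_union.mp hq with h | h
    · exact hΔ q h
    · obtain ⟨k', -, rfl⟩ := Finset.mem_image.mp h
      exact (total (φ, k')).resolve_left (hno k')
  choose v hv using hex
  have hvA : ∀ (φ : Fm C) (k : Fin n), v φ = k ↔ ((φ, k), true) ∈ M := by
    intro φ k
    constructor
    · rintro rfl; exact hv φ
    · intro h; exact huniq φ (v φ) k (hv φ) h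
  have hvB : ∀ (φ : Fm C) (k : Fin n), ((φ, k), false) ∈ M → v φ ≠ k := by
    intro φ k h heq
    exact notboth (φ, k) ((hvA φ k).mp heq) h
  -- v is a legal valuation.
  have hzip : ∀ l : List (Fm C), l.zip (l.map v) = l.map (fun a => (a, v a)) := by
    intro l
    induction l with
    | nil => rfl
    | cons a t ih => simp [ih]
  have hval : IsVal tbl v := by
    intro c args
    by_contra hmem
    have hax := Deriv.tableAx (R := NMVL_A) (tbl := tbl) (H := H) c args (args.map v)
      (by simp) rfl
    refine good _ _ ?_ ?_ hax
    · intro q hq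
      rw [List.mem_toFinset, hzip args] at hq
      obtain ⟨a, -, rfl⟩ := List.mem_map.mp hq
      exact hv a
    · intro q hq
      obtain ⟨k, hk, rfl⟩ := Finset.mem_image.mp hq
      refine (total (Fm.app c args, k)).resolve_left ?_
      intro hA
      exact hmem ((hvA (Fm.app c args) k).mpr hA ▸ hk)
  -- v satisfies all hypotheses.
  have hsat : ∀ T ∈ H, Sat v T := by
    intro T hT hant
    by_contra hsuc
    push_neg at hsuc
    refine good T.ant T.suc (fun p hp => (hvA p.1 p.2).mp (hant p hp)) ?_ (Deriv.hyp hT)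
    intro p hp
    refine (total p).resolve_left ?_
    intro hA
    exact hsuc p hp ((hvA p.1 p.2).mpr hA)
  -- v witnesses failure of the conclusion, contradicting entailment.
  have hant : ∀ p ∈ S.ant, v p.1 = p.2 := by
    intro p hp
    exact (hvA p.1 p.2).mpr (hX₀M (Or.inl ⟨p, Finset.mem_coe.mpr hp, rfl⟩))
  obtain ⟨p, hp, hvp⟩ := hent v hval hsat hant
  exact hvB p.1 p.2 (hX₀M (Or.inr ⟨p, Finset.mem_coe.mpr hp, rfl⟩)) hvp
end

section
/- If Γ* is a maximal set of labelled formulas (as in the completeness proof for NMVL_A) containing exactly one label per formula, then the function v defined by v(φ) = v_k iff (φ,k) ∈ Γ* is a legal valuation: for every ℓ-ary connective ∗ and formulas φ₁,…,φ_ℓ, v(∗(φ₁,…,φ_ℓ)) ∈ ∗(v(φ₁),…,v(φ_ℓ)). -/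
variable {C : Type} [DecidableEq C] {n : ℕ}

private lemma rweaks {R : Rules} {tbl : C → List (Fin n) → Finset (Fin n)}
    {H : Set (Sequent C n)} {Γ : Finset (Fm C × Fin n)} (Δ : Finset (Fm C × Fin n))
    (h : Deriv R tbl H ⟨Γ, ∅⟩) : Deriv R tbl H ⟨Γ, Δ⟩ := by
  induction Δ using Finset.induction with
  | empty => exact h
  | insert _ _ _ ih => exact ih.rweak _ _

private lemma shift_all {R : Rules} {tbl : C → List (Fin n) → Finset (Fin n)}
    {H : Set (Sequent C n)} (ψ : Fm C) (k₀ : Fin n) :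
    ∀ Δ' : Finset (Fm C × Fin n), (∀ p ∈ Δ', p.1 = ψ ∧ p.2 ≠ k₀) →
      ∀ Γ, Deriv R tbl H ⟨Γ, Δ'⟩ → Deriv R tbl H ⟨insert (ψ, k₀) Γ, ∅⟩ := by
  intro Δ'
  induction Δ' using Finset.induction with
  | empty => intro _ Γ h; exact h.lweak ψ k₀
  | @insert p s hp ih =>
    intro hall Γ h
    obtain ⟨h1, h2⟩ := hall p (Finset.mem_insert_self _ _)
    rw [show insert p s = insert (p.1, p.2) s by rw [Prod.mk.eta]] at h
    have d1 : Deriv R tbl H ⟨insert (p.1, k₀) Γ, s⟩ := Deriv.rshift p.1 h2 h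
    rw [h1] at d1
    have := ih (fun q hq => hall q (Finset.mem_insert_of_mem hq)) _ d1
    rwa [Finset.insert_idem] at this

/-- the function read off a maximal complete set is a legal valuation. -/
theorem stmt6 (hn : 2 ≤ n) (tbl : C → List (Fin n) → Finset (Fin n))
    (htbl : ∀ c ks, (tbl c ks).Nonempty) (H : Set (Sequent C n))
    (Γ Δ : Finset (Fm C × Fin n)) (G : Set (Fm C × Fin n)) (hG : ↑Γ ⊆ G)
    (hcons : ∀ Γ' : Finset (Fm C × Fin n), ↑Γ' ⊆ G → ¬ Deriv NMVL_A tbl H ⟨Γ', Δ⟩)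
    (hmax : ∀ G' : Set (Fm C × Fin n), G ⊆ G' →
      (∀ Γ' : Finset (Fm C × Fin n), ↑Γ' ⊆ G' → ¬ Deriv NMVL_A tbl H ⟨Γ', Δ⟩) → G' = G)
    (hcomp : ∀ φ : Fm C, ∃! k : Fin n, (φ, k) ∈ G)
    (v : Fm C → Fin n) (hv : ∀ (φ : Fm C) (k : Fin n), v φ = k ↔ (φ, k) ∈ G) :
    IsVal tbl v := by
  intro c args
  by_contra hmem
  set ψ := Fm.app c args
  set k₀ := v ψ with hk₀
  set ks := args.map v with hks
  have d0 := Deriv.tableAx (R := NMVL_A) (tbl := tbl) (H := H) c args ks (by simp [hks]) rfl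
  have hsuc : ∀ p ∈ (tbl c ks).image (fun k => (ψ, k)), p.1 = ψ ∧ p.2 ≠ k₀ := by
    intro p hp
    simp only [Finset.mem_image] at hp
    obtain ⟨k, hk, rfl⟩ := hp
    exact ⟨rfl, fun h => hmem (h ▸ hk)⟩
  have d1 := shift_all ψ k₀ _ hsuc _ d0
  have d2 : Deriv NMVL_A tbl H ⟨insert (ψ, k₀) (args.zip ks).toFinset, Δ⟩ := rweaks Δ d1
  refine hcons _ ?_ d2
  intro p hp
  simp only [Finset.coe_insert, Set.mem_insert_iff, Finset.mem_coe, List.mem_toFinset] at hp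
  rcases hp with rfl | hp
  · exact (hv ψ k₀).mp rfl
  · have : args.zip ks = args.map (fun a => (a, v a)) := by
      simpa using (List.zip_map' : (args.map id).zip (args.map v) = args.map (fun a => (id a, v a)))
    rw [this, List.mem_map] at hp
    obtain ⟨a, _, rfl⟩ := hp
    exact (hv a (v a)).mp rfl
end

section
/- Every instance of the NMVL_R table rule (from Γ → Δ,(φⱼ,kⱼ), j = 1,…,ℓ, infer Γ → Δ, {(∗(φ₁,…,φ_ℓ),k) : v_k ∈ ∗(v_{k₁},…,v_{k_ℓ})}) is derivable in NMVL_A by ℓ cuts with the corresponding table axiom. -/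
variable {C : Type} [DecidableEq C] {n : ℕ}

lemma weakL_union {R : Rules} {tbl : C → List (Fin n) → Finset (Fin n)}
    {H : Set (Sequent C n)} {Γ Δ : Finset (Fm C × Fin n)}
    (h : Deriv R tbl H ⟨Γ, Δ⟩) (S : Finset (Fm C × Fin n)) :
    Deriv R tbl H ⟨Γ ∪ S, Δ⟩ := by
  induction S using Finset.induction with
  | empty => simpa using h
  | @insert a S ha ih =>
    obtain ⟨φ, k⟩ := a
    rw [Finset.union_insert]
    exact Deriv.lweak φ k ih

lemma weakR_union {R : Rules} {tbl : C → List (Fin n) → Finset (Fin n)}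
    {H : Set (Sequent C n)} {Γ Δ : Finset (Fm C × Fin n)}
    (h : Deriv R tbl H ⟨Γ, Δ⟩) (S : Finset (Fm C × Fin n)) :
    Deriv R tbl H ⟨Γ, Δ ∪ S⟩ := by
  induction S using Finset.induction with
  | empty => simpa using h
  | @insert a S ha ih =>
    obtain ⟨φ, k⟩ := a
    rw [Finset.union_insert]
    exact Deriv.rweak φ k ih

lemma weaken {R : Rules} {tbl : C → List (Fin n) → Finset (Fin n)}
    {H : Set (Sequent C n)} {Γ Δ Γ' Δ' : Finset (Fm C × Fin n)}
    (hΓ : Γ ⊆ Γ') (hΔ : Δ ⊆ Δ') (h : Deriv R tbl H ⟨Γ, Δ⟩) :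
    Deriv R tbl H ⟨Γ', Δ'⟩ := by
  have := weakR_union (weakL_union h Γ') Δ'
  rwa [Finset.union_eq_right.mpr hΓ, Finset.union_eq_right.mpr hΔ] at this

/-- the table rules of NMVL_R are derivable in NMVL_A. -/
theorem stmt8 (hn : 2 ≤ n) (tbl : C → List (Fin n) → Finset (Fin n))
    (htbl : ∀ c ks, (tbl c ks).Nonempty) (H : Set (Sequent C n))
    (Γ Δ : Finset (Fm C × Fin n)) (c : C) (args : List (Fm C)) (ks : List (Fin n))
    (hlen : ks.length = args.length)
    (prem : ∀ p ∈ args.zip ks, Deriv NMVL_A tbl H ⟨Γ, insert p Δ⟩) :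
    Deriv NMVL_A tbl H ⟨Γ, Δ ∪ (tbl c ks).image (fun k => (Fm.app c args, k))⟩ := by
  set Δ' : Finset (Fm C × Fin n) := Δ ∪ (tbl c ks).image (fun k => (Fm.app c args, k)) with hΔ'
  have key : ∀ S : Finset (Fm C × Fin n), (∀ p ∈ S, p ∈ args.zip ks) →
      Deriv NMVL_A tbl H ⟨Γ ∪ S, Δ'⟩ → Deriv NMVL_A tbl H ⟨Γ, Δ'⟩ := by
    intro S
    induction S using Finset.induction with
    | empty => intro _ hd; simpa using hd
    | @insert a S ha ih =>
      intro hsub hd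
      obtain ⟨φ, k⟩ := a
      have h1 : Deriv NMVL_A tbl H ⟨Γ ∪ S, insert (φ, k) Δ'⟩ := by
        refine weaken Finset.subset_union_left ?_ (prem (φ, k) (hsub _ (Finset.mem_insert_self _ _)))
        exact Finset.insert_subset_insert _ Finset.subset_union_left
      have h2 : Deriv NMVL_A tbl H ⟨insert (φ, k) (Γ ∪ S), Δ'⟩ := by
        rwa [Finset.union_insert] at hd
      exact ih (fun p hp => hsub p (Finset.mem_insert_of_mem hp)) (Deriv.cut φ k rfl h1 h2)
  apply key ((args.zip ks).toFinset) (by simp)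
  exact weaken Finset.subset_union_right Finset.subset_union_right
    (Deriv.tableAx c args ks hlen rfl)
end
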